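/- If c is a monotonic cost function and A is a c.e. set obeying c via some computable approximation, then there is a computable enumeration (a computable approximation with B_s ⊆ B_{s+1}) of A that obeys c. -/

import Mathlib

/-- A cost function: computable and nonnegative. -/
def IsCostFunction (c : ℕ → ℕ → ℚ) : Prop :=
  Computable₂ c ∧ ∀ x s, 0 ≤ c x s

/-- The cost of the change from stage `s-1` to stage `s`: `c x s` for the least
`x < s` that changes, and `0` if there is no such `x`. -/
def stageCost (c : ℕ → ℕ → ℚ) (A : ℕ → ℕ → Bool) (s : ℕ) : ℚ :=
  if h : ∃ x, x < s ∧ A (s - 1) x ≠ A s x then c (Nat.find h) s else 0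

/-- `A` is a computable approximation of the set `L`: a computable sequence of
finite sets converging pointwise to `L`. -/
def IsCompApprox (A : ℕ → ℕ → Bool) (L : ℕ → Bool) : Prop :=
  Computable₂ A ∧ (∀ s, Set.Finite {x | A s x = true}) ∧
    ∀ x, ∃ N, ∀ s, N ≤ s → A s x = L x

/-- The total cost of the approximation `A` is bounded by `q`. -/
def ObeysWith (c : ℕ → ℕ → ℚ) (A : ℕ → ℕ → Bool) (q : ℚ) : Prop :=
  ∀ n, ∑ s ∈ Finset.range n, stageCost c A s ≤ q

/-- A (Δ⁰₂) set `L` obeys the cost function `c`. -/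
def Obeys (c : ℕ → ℕ → ℚ) (L : ℕ → Bool) : Prop :=
  ∃ A, IsCompApprox A L ∧ ∃ q, ObeysWith c A q

/-- Monotonic: non-increasing in the main argument, zero for `x > s`,
non-decreasing in the stage. -/
def MonotonicCF (c : ℕ → ℕ → ℚ) : Prop :=
  (∀ x s, c (x + 1) s ≤ c x s) ∧ (∀ x s, s < x → c x s = 0) ∧
    ∀ x s, c x s ≤ c x (s + 1)

/-- The limit condition: `lim_x liminf_s c(x,s) = 0`. -/
def LimitCondition (c : ℕ → ℕ → ℚ) : Prop :=
  ∀ e : ℕ, ∃ x0, ∀ x, x0 ≤ x → ∀ t, ∃ s, t ≤ s ∧ c x s ≤ ((2 : ℚ) ^ e)⁻¹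

/-- `L` is computably enumerable. -/
def CEset (L : ℕ → Bool) : Prop :=
  ∃ f : ℕ →. Unit, Partrec f ∧ ∀ x, (f x).Dom ↔ L x = true



namespace Stmt2Aux

/-- Bounded boolean "forall x < n". -/
def ballB (g : ℕ → Bool) : ℕ → Bool
  | 0 => true
  | n + 1 => ballB g n && g n

theorem ballB_iff {g : ℕ → Bool} : ∀ {n : ℕ}, ballB g n = true ↔ ∀ x, x < n → g x = true := by
  intro n
  induction n with
  | zero => simp [ballB]
  | succ n ih =>
    simp only [ballB, Bool.and_eq_true, ih]
    constructor
    · rintro ⟨h1, h2⟩ x hx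
      rcases Nat.lt_succ_iff_lt_or_eq.1 hx with h | rfl
      · exact h1 x h
      · exact h2
    · intro h
      exact ⟨fun x hx => h x (hx.trans (Nat.lt_succ_self n)), h n (Nat.lt_succ_self n)⟩

theorem computable_ballB {α} [Primcodable α] {g : α → ℕ → Bool} (hg : Computable₂ g) :
    Computable₂ fun a n => ballB (g a) n := by
  have hc : Computable fun r : (α × ℕ) × ℕ × Bool => r.2.2 := Computable.snd.comp Computable.snd
  have hgc : Computable fun r : (α × ℕ) × ℕ × Bool => g r.1.1 r.2.1 :=
    hg.comp (Computable.fst.comp Computable.fst) (Computable.fst.comp Computable.snd)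
  have hcond : Computable fun r : (α × ℕ) × ℕ × Bool => cond r.2.2 (g r.1.1 r.2.1) false :=
    Computable.cond hc hgc (Computable.const false)
  have hh' : Computable fun r : (α × ℕ) × ℕ × Bool => r.2.2 && g r.1.1 r.2.1 :=
    hcond.of_eq fun r => by cases hr : r.2.2 <;> simp [hr]
  have hh : Computable₂ fun (p : α × ℕ) (q : ℕ × Bool) => q.2 && g p.1 q.1 := hh'.to₂
  have h := Computable.nat_rec (f := fun p : α × ℕ => p.2) (g := fun _ : α × ℕ => true)
    Computable.snd (Computable.const true) hh
  refine h.of_eq fun p => ?_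
  obtain ⟨a, n⟩ := p
  induction n with
  | zero => rfl
  | succ n ih =>
    show ((Nat.rec true (fun y IH => IH && g a y) n : Bool) && g a n) = ballB (g a) (n + 1)
    rw [ballB]
    exact congrArg (· && g a n) ih

/-- Least `n` with `g n = true` (or `0` if none). -/
noncomputable def findTrue (g : ℕ → Bool) : ℕ :=
  letI : Decidable (∃ n, g n = true) := Classical.dec _
  if h : ∃ n, g n = true then Nat.find h else 0

theorem findTrue_spec {g : ℕ → Bool} (h : ∃ n, g n = true) : g (findTrue g) = true := by
  rw [findTrue]
  split
  · exact Nat.find_spec h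
  · exact absurd h (by assumption)

theorem findTrue_min {g : ℕ → Bool} (h : ∃ n, g n = true) {m : ℕ} (hm : g m = true) :
    findTrue g ≤ m := by
  rw [findTrue]
  split
  · exact Nat.find_min' _ hm
  · exact absurd h (by assumption)

theorem computable_findTrue {α} [Primcodable α] {p : α → ℕ → Bool} (hp : Computable₂ p)
    (H : ∀ a, ∃ n, p a n = true) : Computable fun a => findTrue (p a) := by
  have hr : Partrec fun a => Nat.rfind ((p a : ℕ →. Bool)) := Partrec.rfind hp.partrec₂
  refine hr.of_eq_tot fun a => ?_
  obtain ⟨n, hn, _⟩ := Nat.rfind_min' (p := p a) (findTrue_spec (H a))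
  have hval : p a n = true := by simpa using Nat.rfind_spec hn
  have h1 : findTrue (p a) ≤ n := findTrue_min (H a) hval
  have h2 : ¬ findTrue (p a) < n := fun hlt => by
    have := Nat.rfind_min hn hlt
    simp only [PFun.coe_val, Part.mem_some_iff] at this
    rw [findTrue_spec (H a)] at this
    cases this
  have : findTrue (p a) = n := le_antisymm h1 (not_lt.1 h2)
  rw [this]; exact hn



section Construction

variable (A' E : ℕ → ℕ → Bool)

/-- The search condition at step `k` with previous value `vprev`, for the coded pair `p`:
`A' (vprev + 1 + p.1) ∩ [0,k] ⊆ E p.2`. -/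
def condV (k vprev p : ℕ) : Bool :=
  ballB (fun x => !(A' (vprev + 1 + p.unpair.1) x) || E p.unpair.2 x) (k + 1)

noncomputable def stepV (k vprev : ℕ) : ℕ := findTrue (condV A' E k vprev)

/-- The sequence of pairs `(v_k, u_k)`. -/
noncomputable def V : ℕ → ℕ × ℕ
  | 0 => (0, 0)
  | k + 1 =>
    ((V k).1 + 1 + (stepV A' E (k + 1) (V k).1).unpair.1,
      (stepV A' E (k + 1) (V k).1).unpair.2)

/-- The enumeration. -/
noncomputable def BB (s x : ℕ) : Bool :=
  !(ballB (fun k => !(decide (1 ≤ k) && decide (x ≤ k) && A' (V A' E k).1 x)) (s + 1))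

theorem BB_iff {s x : ℕ} :
    BB A' E s x = true ↔ ∃ k, k ≤ s ∧ 1 ≤ k ∧ x ≤ k ∧ A' (V A' E k).1 x = true := by
  rw [BB, Bool.not_eq_true']
  constructor
  · intro h
    have : ¬ ∀ k, k < s + 1 →
        (!(decide (1 ≤ k) && decide (x ≤ k) && A' (V A' E k).1 x)) = true := by
      intro hall
      rw [ballB_iff.2 hall] at h; cases h
    push_neg at this
    obtain ⟨k, hk, hk2⟩ := this
    have hk2' : (decide (1 ≤ k) && decide (x ≤ k) && A' (V A' E k).1 x) = true := by
      simpa [Nat.one_le_iff_ne_zero] using hk2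
    clear hk2
    rename' hk2' => hk2
    simp only [Bool.and_eq_true, decide_eq_true_eq] at hk2
    exact ⟨k, Nat.lt_succ_iff.1 hk, hk2.1.1, hk2.1.2, hk2.2⟩
  · rintro ⟨k, hk, h1, h2, h3⟩
    rw [Bool.eq_false_iff]
    intro hb
    have := ballB_iff.1 hb k (Nat.lt_succ_iff.2 hk)
    rw [Bool.not_eq_true', Bool.and_eq_false_iff] at this
    rcases this with h | h
    · rw [Bool.and_eq_false_iff] at h
      rcases h with h | h <;> simp [h1, h2] at h
    · rw [h3] at h; cases h

theorem V_fst_lt (k : ℕ) : (V A' E k).1 < (V A' E (k + 1)).1 := by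
  show (V A' E k).1 < (V A' E k).1 + 1 + _
  omega

theorem V_fst_le (k : ℕ) : k ≤ (V A' E k).1 := by
  induction k with
  | zero => exact Nat.zero_le _
  | succ k ih => have := V_fst_lt A' E k; omega

variable {A' E}

theorem V_safe (htot : ∀ k vprev, ∃ p, condV A' E k vprev p = true) (k : ℕ) :
    ∀ x, x ≤ k + 1 → A' (V A' E (k + 1)).1 x = true → E (V A' E (k + 1)).2 x = true := by
  intro x hx hA
  have hspec := findTrue_spec (htot (k + 1) (V A' E k).1)
  rw [show findTrue (condV A' E (k+1) (V A' E k).1) = stepV A' E (k+1) (V A' E k).1 from rfl,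
      condV] at hspec
  have := ballB_iff.1 hspec x (by omega)
  have hV1 : (V A' E (k + 1)).1 = (V A' E k).1 + 1 + (stepV A' E (k + 1) (V A' E k).1).unpair.1 := rfl
  have hV2 : (V A' E (k + 1)).2 = (stepV A' E (k + 1) (V A' E k).1).unpair.2 := rfl
  rw [← hV1, ← hV2] at this
  rw [hA] at this
  simpa using this

theorem Computable.band' {α} [Primcodable α] {f g : α → Bool} (hf : Computable f)
    (hg : Computable g) : Computable fun a => f a && g a := by
  have h : Computable fun a => cond (f a) (g a) false := Computable.cond hf hg (Computable.const false)
  exact h.of_eq fun a => by cases hfa : f a <;> simp [hfa]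

theorem Computable.bnot' {α} [Primcodable α] {f : α → Bool} (hf : Computable f) :
    Computable fun a => !(f a) := by
  have h : Computable fun a => cond (f a) false true := Computable.cond hf (Computable.const false) (Computable.const true)
  exact h.of_eq fun a => by cases hfa : f a <;> simp [hfa]

theorem Computable.bor' {α} [Primcodable α] {f g : α → Bool} (hf : Computable f)
    (hg : Computable g) : Computable fun a => f a || g a := by
  have h : Computable fun a => cond (f a) true (g a) := Computable.cond hf (Computable.const true) hg
  exact h.of_eq fun a => by cases hfa : f a <;> simp [hfa]

section Computability

variable {A' E : ℕ → ℕ → Bool}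

theorem computable_condV (hA' : Computable₂ A') (hE : Computable₂ E) :
    Computable fun t : (ℕ × ℕ) × ℕ => condV A' E t.1.1 t.1.2 t.2 := by
  have harg : Computable fun q : ((ℕ × ℕ) × ℕ) × ℕ => q.1.1.2 + 1 + q.1.2.unpair.1 :=
    Primrec.to_comp <| Primrec₂.comp Primrec.nat_add
      (Primrec₂.comp Primrec.nat_add (Primrec.snd.comp (Primrec.fst.comp Primrec.fst))
        (Primrec.const 1))
      (Primrec.fst.comp (Primrec.unpair.comp (Primrec.snd.comp Primrec.fst)))
  have hA : Computable fun q : ((ℕ × ℕ) × ℕ) × ℕ => A' (q.1.1.2 + 1 + q.1.2.unpair.1) q.2 :=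
    hA'.comp harg Computable.snd
  have hEq : Computable fun q : ((ℕ × ℕ) × ℕ) × ℕ => E q.1.2.unpair.2 q.2 :=
    hE.comp (Primrec.to_comp (Primrec.snd.comp (Primrec.unpair.comp (Primrec.snd.comp Primrec.fst))))
      Computable.snd
  have hg : Computable₂ fun (t : (ℕ × ℕ) × ℕ) (x : ℕ) =>
      (!(A' (t.1.2 + 1 + t.2.unpair.1) x) || E t.2.unpair.2 x) :=
    (Computable.bor' (Computable.bnot' hA) hEq).to₂
  have h := (computable_ballB hg).comp (Computable.id (α := (ℕ × ℕ) × ℕ))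
    (Computable.succ.comp (Computable.fst.comp Computable.fst))
  exact h.of_eq fun t => rfl

theorem computable_stepV (hA' : Computable₂ A') (hE : Computable₂ E)
    (htot : ∀ k vprev, ∃ p, condV A' E k vprev p = true) :
    Computable₂ (stepV A' E) := by
  have hp : Computable₂ fun (t : ℕ × ℕ) (p : ℕ) => condV A' E t.1 t.2 p :=
    computable_condV hA' hE
  have H : ∀ t : ℕ × ℕ, ∃ n, condV A' E t.1 t.2 n = true := fun t => htot t.1 t.2
  exact computable_findTrue hp H

theorem computable_V (hA' : Computable₂ A') (hE : Computable₂ E)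
    (htot : ∀ k vprev, ∃ p, condV A' E k vprev p = true) :
    Computable (V A' E) := by
  have hstep := computable_stepV hA' hE htot
  have hs : Computable fun r : ℕ × (ℕ × (ℕ × ℕ)) => stepV A' E (r.2.1 + 1) r.2.2.1 :=
    hstep.comp (Computable.succ.comp (Computable.fst.comp Computable.snd))
      (Computable.fst.comp (Computable.snd.comp Computable.snd))
  have hu : Computable fun r : ℕ × (ℕ × (ℕ × ℕ)) => (stepV A' E (r.2.1 + 1) r.2.2.1).unpair :=
    Primrec.unpair.to_comp.comp hs
  have hadd : Computable₂ ((· + ·) : ℕ → ℕ → ℕ) := Primrec.nat_add.to_comp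
  have h1 : Computable fun r : ℕ × (ℕ × (ℕ × ℕ)) =>
      r.2.2.1 + 1 + (stepV A' E (r.2.1 + 1) r.2.2.1).unpair.1 :=
    hadd.comp (Computable.succ.comp (Computable.fst.comp (Computable.snd.comp Computable.snd)))
      (Computable.fst.comp hu)
  have h2 : Computable fun r : ℕ × (ℕ × (ℕ × ℕ)) =>
      (stepV A' E (r.2.1 + 1) r.2.2.1).unpair.2 := Computable.snd.comp hu
  have hh : Computable₂ fun (_ : ℕ) (q : ℕ × (ℕ × ℕ)) =>
      ((q.2.1 + 1 + (stepV A' E (q.1 + 1) q.2.1).unpair.1,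
        (stepV A' E (q.1 + 1) q.2.1).unpair.2) : ℕ × ℕ) := (h1.pair h2).to₂
  have h := Computable.nat_rec (Computable.id (α := ℕ)) (Computable.const ((0, 0) : ℕ × ℕ)) hh
  refine h.of_eq fun k => ?_
  induction k with
  | zero => rfl
  | succ k ih =>
    simp only [V, ← ih]
    rfl

theorem computable_BB (hA' : Computable₂ A') (hE : Computable₂ E)
    (htot : ∀ k vprev, ∃ p, condV A' E k vprev p = true) :
    Computable₂ (BB A' E) := by
  have hV := computable_V hA' hE htot
  have d1 : Computable fun q : (ℕ × ℕ) × ℕ => decide (1 ≤ q.2) :=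
    Primrec.to_comp (Primrec.nat_le.comp (Primrec.const 1) Primrec.snd).decide
  have d2 : Computable fun q : (ℕ × ℕ) × ℕ => decide (q.1.2 ≤ q.2) :=
    Primrec.to_comp (Primrec.nat_le.comp (Primrec.snd.comp Primrec.fst) Primrec.snd).decide
  have a3 : Computable fun q : (ℕ × ℕ) × ℕ => A' (V A' E q.2).1 q.1.2 :=
    hA'.comp (Computable.fst.comp (hV.comp Computable.snd))
      (Computable.snd.comp Computable.fst)
  have hg : Computable₂ fun (p : ℕ × ℕ) (k : ℕ) =>
      (!(decide (1 ≤ k) && decide (p.2 ≤ k) && A' (V A' E k).1 p.2)) :=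
    (Computable.bnot' (Computable.band' (Computable.band' d1 d2) a3)).to₂
  have hb : Computable fun p : ℕ × ℕ =>
      ballB (fun k => !(decide (1 ≤ k) && decide (p.2 ≤ k) && A' (V A' E k).1 p.2)) (p.1 + 1) :=
    (computable_ballB hg).comp (Computable.id (α := ℕ × ℕ))
      (Computable.succ.comp Computable.fst)
  exact (Computable.bnot' hb).of_eq fun p => rfl

end Computability

end Construction

end Stmt2Aux

section MainLemmas

theorem c_antitone {c : ℕ → ℕ → ℚ} (h : ∀ x s, c (x + 1) s ≤ c x s) (s : ℕ) {x y : ℕ}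
    (hxy : x ≤ y) : c y s ≤ c x s := by
  induction y, hxy using Nat.le_induction with
  | base => exact le_refl _
  | succ y hy ih => exact (h y s).trans ih

theorem c_stage_mono {c : ℕ → ℕ → ℚ} (h : ∀ x s, c x s ≤ c x (s + 1)) (x : ℕ) {s t : ℕ}
    (hst : s ≤ t) : c x s ≤ c x t := by
  induction t, hst using Nat.le_induction with
  | base => exact le_refl _
  | succ t ht ih => exact ih.trans (h x t)

theorem stageCost_nonneg {c : ℕ → ℕ → ℚ} {D : ℕ → ℕ → Bool} (h0 : ∀ x s, 0 ≤ c x s) (s : ℕ) :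
    0 ≤ stageCost c D s := by
  rw [stageCost]; split
  · exact h0 _ _
  · exact le_refl _

theorem exists_change {g : ℕ → Bool} {a b : ℕ} (hab : a < b) (ha : g a = false)
    (hb : g b = true) : ∃ w, a < w ∧ w ≤ b ∧ g (w - 1) = false ∧ g w = true := by
  have hex : ∃ w, a < w ∧ g w = true := ⟨b, hab, hb⟩
  refine ⟨Nat.find hex, (Nat.find_spec hex).1, Nat.find_min' hex ⟨hab, hb⟩, ?_,
    (Nat.find_spec hex).2⟩
  rcases Nat.lt_or_ge a (Nat.find hex - 1) with h | h
  · have hlt : Nat.find hex - 1 < Nat.find hex := by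
      have := (Nat.find_spec hex).1; omega
    have := Nat.find_min hex hlt
    cases hgw : g (Nat.find hex - 1)
    · rfl
    · exact absurd ⟨h, hgw⟩ this
  · have heq : Nat.find hex - 1 = a := by
      have := (Nat.find_spec hex).1; omega
    rw [heq]; exact ha

end MainLemmas

/-- If `c` is a monotonic cost function and `A` is a c.e. set
obeying `c`, then some computable enumeration of `A` obeys `c`. -/
theorem stmt2 (c : ℕ → ℕ → ℚ) (hc : IsCostFunction c) (hm : MonotonicCF c)
    (A : ℕ → Bool) (hce : CEset A) (hA : Obeys c A) :
    ∃ app : ℕ → ℕ → Bool, IsCompApprox app A ∧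
      (∀ s x, app s x = true → app (s + 1) x = true) ∧
      ∃ q : ℚ, ObeysWith c app q := by
  classical
  obtain ⟨hccomp, hc0⟩ := hc
  obtain ⟨hm1, hm2, hm3⟩ := hm
  obtain ⟨A', ⟨hA'c, hA'fin, hA'lim⟩, q, hq⟩ := hA
  obtain ⟨f, hf, hfdom⟩ := hce
  -- the c.e. enumeration E
  have hf'p : Partrec fun n => (f n).map fun _ => (0 : ℕ) := hf.map ((Computable.const 0).to₂)
  obtain ⟨cd, hcd⟩ := Nat.Partrec.Code.exists_code.1 (Partrec.nat_iff.1 hf'p)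
  set E : ℕ → ℕ → Bool := fun s x => (Nat.Partrec.Code.evaln s cd x).isSome with hEdef
  have hEc : Computable₂ E :=
    Primrec.to_comp (Primrec.option_isSome.comp (Nat.Partrec.Code.primrec_evaln.comp
      ((Primrec.fst.pair (Primrec.const cd)).pair Primrec.snd)))
  have hdomiff : ∀ x, (Nat.Partrec.Code.eval cd x).Dom ↔ A x = true := by
    intro x
    rw [hcd]
    exact hfdom x
  have hEdom : ∀ x, A x = true ↔ ∃ s, E s x = true := by
    intro x
    rw [← hdomiff x]
    constructor
    · intro hdom
      obtain ⟨y, hy⟩ := Part.dom_iff_mem.1 hdom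
      obtain ⟨k, hk⟩ := Nat.Partrec.Code.evaln_complete.1 hy
      exact ⟨k, Option.isSome_iff_exists.2 ⟨y, hk⟩⟩
    · rintro ⟨s, hs⟩
      obtain ⟨y, hy⟩ := Option.isSome_iff_exists.1 hs
      exact Part.dom_iff_mem.2 ⟨y, Nat.Partrec.Code.evaln_sound hy⟩
  have hEmono : ∀ {s t x : ℕ}, s ≤ t → E s x = true → E t x = true := by
    intro s t x hst h
    obtain ⟨y, hy⟩ := Option.isSome_iff_exists.1 h
    exact Option.isSome_iff_exists.2 ⟨y, Nat.Partrec.Code.evaln_mono hst hy⟩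
  -- suprema lemmas
  have hsettle : ∀ k, ∃ N, ∀ x, x ≤ k → ∀ s, N ≤ s → A' s x = A x := by
    intro k
    induction k with
    | zero =>
      obtain ⟨N, hN⟩ := hA'lim 0
      exact ⟨N, fun x hx s hs => by rw [Nat.le_zero.1 hx]; exact hN s hs⟩
    | succ k ih =>
      obtain ⟨N, hN⟩ := ih
      obtain ⟨M, hM⟩ := hA'lim (k + 1)
      refine ⟨max N M, fun x hx s hs => ?_⟩
      rcases (by omega : x ≤ k ∨ x = k + 1) with h | rfl
      · exact hN x h s (le_trans (le_max_left _ _) hs)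
      · exact hM s (le_trans (le_max_right _ _) hs)
  have hEsup : ∀ k, ∃ u, ∀ x, x ≤ k → A x = true → E u x = true := by
    intro k
    induction k with
    | zero =>
      by_cases h : A 0 = true
      · obtain ⟨s, hs⟩ := (hEdom 0).1 h
        exact ⟨s, fun x hx _ => by rw [Nat.le_zero.1 hx]; exact hs⟩
      · exact ⟨0, fun x hx hAx => absurd hAx (by rw [Nat.le_zero.1 hx]; exact h)⟩
    | succ k ih =>
      obtain ⟨u, hu⟩ := ih
      by_cases h : A (k + 1) = true
      · obtain ⟨t, ht⟩ := (hEdom (k + 1)).1 h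
        refine ⟨max u t, fun x hx hAx => ?_⟩
        rcases (by omega : x ≤ k ∨ x = k + 1) with h' | rfl
        · exact hEmono (le_max_left _ _) (hu x h' hAx)
        · exact hEmono (le_max_right _ _) ht
      · refine ⟨u, fun x hx hAx => ?_⟩
        rcases (by omega : x ≤ k ∨ x = k + 1) with h' | rfl
        · exact hu x h' hAx
        · exact absurd hAx h
  -- totality of the search
  have htot : ∀ k vprev, ∃ p, Stmt2Aux.condV A' E k vprev p = true := by
    intro k vprev
    obtain ⟨N, hN⟩ := hsettle k
    obtain ⟨u, hu⟩ := hEsup k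
    refine ⟨Nat.pair (max N (vprev + 1) - (vprev + 1)) u, ?_⟩
    rw [Stmt2Aux.condV]
    apply Stmt2Aux.ballB_iff.2
    intro x hx
    have hxk : x ≤ k := by omega
    simp only [Nat.unpair_pair]
    have hvv : vprev + 1 + (max N (vprev + 1) - (vprev + 1)) = max N (vprev + 1) := by omega
    rw [hvv]
    cases hAv : A' (max N (vprev + 1)) x
    · simp
    · have hAx : A x = true := by
        rw [← hN x hxk (max N (vprev + 1)) (le_max_left _ _)]; exact hAv
      rw [hu x hxk hAx]
      simp
  -- the enumeration B
  set B : ℕ → ℕ → Bool := Stmt2Aux.BB A' E with hBdef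
  have hBiff : ∀ {s x : ℕ},
      B s x = true ↔ ∃ k, k ≤ s ∧ 1 ≤ k ∧ x ≤ k ∧ A' (Stmt2Aux.V A' E k).1 x = true :=
    fun {s x} => Stmt2Aux.BB_iff A' E
  have hBle : ∀ x u v, u ≤ v → B u x = true → B v x = true := by
    intro x u v huv h
    obtain ⟨k, hk, r⟩ := hBiff.1 h
    exact hBiff.2 ⟨k, hk.trans huv, r⟩
  have hBsub : ∀ s x, B s x = true → A x = true := by
    intro s x h
    obtain ⟨k, hks, hk1, hxk, hAk⟩ := hBiff.1 h
    obtain ⟨k', rfl⟩ : ∃ k', k = k' + 1 := ⟨k - 1, by omega⟩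
    have := Stmt2Aux.V_safe htot k' x hxk hAk
    exact (hEdom x).2 ⟨_, this⟩
  -- convergence
  have hBlim : ∀ x, ∃ N, ∀ s, N ≤ s → B s x = A x := by
    intro x
    cases hAx : A x
    · refine ⟨0, fun s _ => ?_⟩
      cases hB : B s x
      · rfl
      · rw [hBsub s x hB] at hAx; cases hAx
    · obtain ⟨N, hN⟩ := hA'lim x
      refine ⟨max (max x 1) N, fun s hs => ?_⟩
      have hVk : A' (Stmt2Aux.V A' E (max (max x 1) N)).1 x = true := by
        rw [hN _ (le_trans (le_max_right _ _) (Stmt2Aux.V_fst_le A' E _))]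
        exact hAx
      exact hBiff.2 ⟨max (max x 1) N, hs, le_trans (le_max_right _ _) (le_max_left _ _),
        le_trans (le_max_left _ _) (le_max_left _ _), hVk⟩
  -- cost
  have hstage : ∀ s, 2 ≤ s → stageCost c B s ≤
      ∑ w ∈ Finset.Ioc (Stmt2Aux.V A' E (s - 1)).1 (Stmt2Aux.V A' E s).1, stageCost c A' w := by
    intro s hs
    by_cases hch : ∃ x, x < s ∧ B (s - 1) x ≠ B s x
    · rw [stageCost, dif_pos hch]
      obtain ⟨hmlt, hmne⟩ := Nat.find_spec hch
      set m := Nat.find hch with hmdef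
      have h2 : B s m = true := by
        cases hb : B s m
        · cases hb' : B (s - 1) m
          · exact absurd (hb'.trans hb.symm) hmne
          · rw [hBle m (s - 1) s (by omega) hb'] at hb; cases hb
        · rfl
      have h1 : B (s - 1) m = false := by
        cases hb' : B (s - 1) m
        · rfl
        · exact absurd (hb'.trans h2.symm) hmne
      obtain ⟨k, hks, hk1, hxk, hAk⟩ := hBiff.1 h2
      have hkeq : k = s := by
        by_contra hne
        have hks' : k ≤ s - 1 := by omega
        have := (hBiff (s := s - 1) (x := m)).2 ⟨k, hks', hk1, hxk, hAk⟩
        rw [this] at h1; cases h1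
      rw [hkeq] at hAk
      have hm_le : m ≤ s - 1 := by omega
      have hAprev : A' (Stmt2Aux.V A' E (s - 1)).1 m = false := by
        cases hb : A' (Stmt2Aux.V A' E (s - 1)).1 m
        · rfl
        · have := (hBiff (s := s - 1) (x := m)).2 ⟨s - 1, le_refl _, by omega, hm_le, hb⟩
          rw [this] at h1; cases h1
      have hvlt : (Stmt2Aux.V A' E (s - 1)).1 < (Stmt2Aux.V A' E s).1 := by
        have := Stmt2Aux.V_fst_lt A' E (s - 1)
        rwa [show s - 1 + 1 = s by omega] at this
      obtain ⟨w, hw1, hw2, hwf, hwt⟩ :=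
        exists_change (g := fun t => A' t m) hvlt hAprev hAk
      have hmw : m < w := by
        have := Stmt2Aux.V_fst_le A' E (s - 1); omega
      have hcond : ∃ x, x < w ∧ A' (w - 1) x ≠ A' w x :=
        ⟨m, hmw, by rw [hwf, hwt]; exact Bool.false_ne_true⟩
      have hsc : stageCost c A' w = c (Nat.find hcond) w := by rw [stageCost, dif_pos hcond]
      have hfle : Nat.find hcond ≤ m :=
        Nat.find_min' hcond ⟨hmw, by rw [hwf, hwt]; exact Bool.false_ne_true⟩
      have hsw : s ≤ w := by
        have := Stmt2Aux.V_fst_le A' E (s - 1); omega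
      calc c m s ≤ c m w := c_stage_mono hm3 m hsw
        _ ≤ c (Nat.find hcond) w := c_antitone hm1 w hfle
        _ = stageCost c A' w := hsc.symm
        _ ≤ _ := Finset.single_le_sum (fun i _ => stageCost_nonneg hc0 i)
            (Finset.mem_Ioc.2 ⟨hw1, hw2⟩)
    · rw [stageCost, dif_neg hch]
      exact Finset.sum_nonneg fun w _ => stageCost_nonneg hc0 w
  have hq0 : (0 : ℚ) ≤ q := by simpa using hq 0
  have hc01 : (0 : ℚ) ≤ c 0 1 := hc0 0 1
  have hBB0 : stageCost c B 0 = 0 := by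
    rw [stageCost, dif_neg]
    rintro ⟨x, hx, -⟩
    omega
  have hBB1 : stageCost c B 1 ≤ c 0 1 := by
    rw [stageCost]
    split
    · next h =>
      have h0 : Nat.find h = 0 := by
        have := (Nat.find_spec h).1; omega
      rw [h0]
    · exact hc01
  have hsum : ∀ n, 2 ≤ n → ∑ s ∈ Finset.range n, stageCost c B s ≤
      c 0 1 + ∑ w ∈ Finset.range ((Stmt2Aux.V A' E (n - 1)).1 + 1), stageCost c A' w := by
    intro n hn
    induction n with
    | zero => omega
    | succ n ih =>
      rcases Nat.lt_or_ge n 2 with h2 | h2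
      · have hn1 : n = 1 := by omega
        subst hn1
        rw [Finset.sum_range_succ, Finset.sum_range_succ, Finset.sum_range_zero, hBB0]
        have hnn : (0 : ℚ) ≤ ∑ w ∈ Finset.range ((Stmt2Aux.V A' E (2 - 1)).1 + 1),
            stageCost c A' w := Finset.sum_nonneg fun w _ => stageCost_nonneg hc0 w
        linarith [hBB1]
      · have ihh := ih h2
        rw [Finset.sum_range_succ]
        have hstagen := hstage n h2
        have hle : (Stmt2Aux.V A' E (n - 1)).1 ≤ (Stmt2Aux.V A' E n).1 := by
          have := Stmt2Aux.V_fst_lt A' E (n - 1)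
          rw [show n - 1 + 1 = n by omega] at this
          omega
        have hsplit : ∑ w ∈ Finset.range ((Stmt2Aux.V A' E (n - 1)).1 + 1), stageCost c A' w +
            ∑ w ∈ Finset.Ioc (Stmt2Aux.V A' E (n - 1)).1 (Stmt2Aux.V A' E n).1, stageCost c A' w
            = ∑ w ∈ Finset.range ((Stmt2Aux.V A' E n).1 + 1), stageCost c A' w := by
          rw [Finset.range_eq_Ico, Finset.range_eq_Ico, ← Finset.Ico_add_one_add_one_eq_Ioc]
          exact Finset.sum_Ico_consecutive _ (by omega) (by omega)
        rw [show n + 1 - 1 = n from rfl]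
        linarith
  refine ⟨B, ⟨Stmt2Aux.computable_BB hA'c hEc htot, ?_, hBlim⟩, ?_, c 0 1 + q, ?_⟩
  · intro s
    apply Set.Finite.subset (Set.finite_Iic s)
    intro x hx
    obtain ⟨k, hks, -, hxk, -⟩ := hBiff.1 hx
    exact Set.mem_Iic.2 (hxk.trans hks)
  · intro s x h
    exact hBle x s (s + 1) (Nat.le_succ s) h
  · intro n
    rcases Nat.lt_or_ge n 2 with h2 | h2
    · interval_cases n
      · simp only [Finset.sum_range_zero]; linarith
      · rw [Finset.sum_range_one, hBB0]; linarith
    · refine (hsum n h2).trans ?_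
      have := hq ((Stmt2Aux.V A' E (n - 1)).1 + 1)
      linarith
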